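/- Let F be an algebraically closed field of characteristic 0, k ≥ 2, and J ∈ M_n(F) with r₀ := dim ker(J) ≥ 2. If n ≤ k(r₀ − 1), then the map (X₁, X₂) ↦ X₁^k + J·X₂^k is not surjective on M_n(F). Specifically, there is a matrix C whose lower-right block is a nilpotent Jordan block of size r₀ that is not in the image. -/

import Mathlib

open Matrix

/-- If `r₀ = dim ker J ≥ 2` and `n ≤ k (r₀ - 1)`, then `(X₁,X₂) ↦ X₁^k + J X₂^k`
is not surjective on `M_n(F)`: some `C` is not in the image. -/
theorem stmt_12 {F : Type*} [Field F] [IsAlgClosed F] [CharZero F] {n : ℕ}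
    (J : Matrix (Fin n) (Fin n) F) (k : ℕ) (hk : 2 ≤ k)
    (r₀ : ℕ) (hr₀ : r₀ = Module.finrank F (LinearMap.ker J.mulVecLin))
    (hr₀2 : 2 ≤ r₀) (hn : n ≤ k * (r₀ - 1)) :
    ∃ C : Matrix (Fin n) (Fin n) F,
      ∀ X₁ X₂ : Matrix (Fin n) (Fin n) F, C ≠ X₁ ^ k + J * X₂ ^ k := by
  classical
  -- dim W = r₀
  have hrk : Module.finrank F (LinearMap.range (Jᵀ).mulVecLin)
      = Module.finrank F (LinearMap.range J.mulVecLin) := Matrix.rank_transpose J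
  have h1 := LinearMap.finrank_range_add_finrank_ker (Jᵀ).mulVecLin
  have h2 := LinearMap.finrank_range_add_finrank_ker J.mulVecLin
  set W := LinearMap.ker (Jᵀ).mulVecLin with hWdef
  have hWr : Module.finrank F W = r₀ := by omega
  let bW : Module.Basis (Fin r₀) F W := Module.finBasisOfFinrankEq F W hWr
  let w : Fin r₀ → (Fin n → F) := fun i => (bW i : Fin n → F)
  have hw0 : ∀ i, Jᵀ.mulVec (w i) = 0 := fun i => (bW i).2
  -- target values: shift
  let v : Fin r₀ → (Fin n → F) := fun i => if h : (i : ℕ) + 1 < r₀ then w ⟨i + 1, h⟩ else 0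
  obtain ⟨W', hc⟩ := Submodule.exists_isCompl W
  let S : W →ₗ[F] (Fin n → F) := bW.constr F v
  let φ : (Fin n → F) →ₗ[F] (Fin n → F) := S ∘ₗ (W.linearProjOfIsCompl W' hc)
  refine ⟨(LinearMap.toMatrix' φ)ᵀ, fun X₁ X₂ hC => ?_⟩
  have hφw : ∀ i, φ (w i) = v i := by
    intro i
    have : (W.linearProjOfIsCompl W' hc) (w i) = bW i :=
      Submodule.linearProjOfIsCompl_apply_left hc (bW i)
    simp only [φ, LinearMap.comp_apply, this]
    exact bW.constr_basis F v i
  -- compute Cᵀ mulVec two ways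
  have key : ∀ i, ((X₁ᵀ) ^ k).mulVec (w i) = v i := by
    intro i
    have hCT : (LinearMap.toMatrix' φ : Matrix (Fin n) (Fin n) F)
        = (X₁ᵀ) ^ k + (X₂ᵀ) ^ k * Jᵀ := by
      have := congrArg Matrix.transpose hC
      simpa [Matrix.transpose_add, Matrix.transpose_mul, Matrix.transpose_pow] using this
    have lhs : (LinearMap.toMatrix' φ).mulVec (w i) = v i := by
      rw [← Matrix.toLin'_apply, Matrix.toLin'_toMatrix']
      exact hφw i
    rw [hCT] at lhs
    rw [Matrix.add_mulVec, ← Matrix.mulVec_mulVec, hw0 i, Matrix.mulVec_zero, add_zero] at lhs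
    exact lhs
  -- pass to endomorphisms
  let L : Module.End F (Fin n → F) := Matrix.toLinAlgEquiv' (X₁ᵀ)
  have hLpow : ∀ (m : ℕ) (x : Fin n → F), (L ^ m) x = ((X₁ᵀ) ^ m).mulVec x := by
    intro m x
    rw [show L ^ m = Matrix.toLinAlgEquiv' ((X₁ᵀ) ^ m) from (map_pow _ _ _).symm]
    rfl
  have keyL : ∀ i, (L ^ k) (w i) = v i := fun i => by rw [hLpow]; exact key i
  have w0lt : 0 < r₀ := by omega
  have chain : ∀ j (hj : j < r₀), (L ^ (k * j)) (w ⟨0, w0lt⟩) = w ⟨j, hj⟩ := by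
    intro j
    induction j with
    | zero => intro hj; simp
    | succ m ih =>
      intro hj
      have hm : m < r₀ := by omega
      have : L ^ (k * (m + 1)) = L ^ k * L ^ (k * m) := by
        rw [← pow_add]; ring_nf
      rw [this, Module.End.mul_apply, ih hm, keyL]
      simp only [v]
      rw [dif_pos hj]
  have top : (L ^ (k * (r₀ - 1))) (w ⟨0, w0lt⟩) = w ⟨r₀ - 1, by omega⟩ :=
    chain (r₀ - 1) (by omega)
  have zero : (L ^ (k * r₀)) (w ⟨0, w0lt⟩) = 0 := by
    have : L ^ (k * r₀) = L ^ k * L ^ (k * (r₀ - 1)) := by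
      have e1 : k * r₀ = k + k * (r₀ - 1) := by
        calc k * r₀ = k * ((r₀ - 1) + 1) := by rw [Nat.sub_add_cancel (by omega : 1 ≤ r₀)]
          _ = k * (r₀ - 1) + k := Nat.mul_succ k (r₀ - 1)
          _ = k + k * (r₀ - 1) := Nat.add_comm _ _
      rw [← pow_add, e1]
    rw [this, Module.End.mul_apply, top, keyL]
    simp only [v]
    rw [dif_neg (by omega)]
  -- kernel stabilization
  have hker1 : w ⟨0, w0lt⟩ ∈ LinearMap.ker (L ^ (k * r₀)) := zero
  have hker2 : w ⟨0, w0lt⟩ ∈ LinearMap.ker (L ^ (Module.finrank F (Fin n → F))) :=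
    Module.End.ker_pow_le_ker_pow_finrank L (k * r₀) hker1
  have hfr : Module.finrank F (Fin n → F) = n := Module.finrank_fin_fun F
  rw [hfr] at hker2
  have hker3 : w ⟨0, w0lt⟩ ∈ LinearMap.ker (L ^ (k * (r₀ - 1))) := by
    have : L ^ (k * (r₀ - 1)) = L ^ (k * (r₀ - 1) - n) * L ^ n := by
      rw [← pow_add]; congr 1; omega
    rw [this]
    exact LinearMap.ker_le_ker_comp _ _ hker2
  have : w ⟨r₀ - 1, by omega⟩ = 0 := by rw [← top]; exact hker3
  exact bW.ne_zero ⟨r₀ - 1, by omega⟩ (ZeroMemClass.coe_eq_zero.mp this)
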